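/- Anisotropic interactions in dimension 2: let v_d : ℝ² → ℝ² be Lipschitz with |v_d(x)| = 1 for all x, let R > 0, N ∈ ℕ, U_0 ⊆ B_R(0) measurable, F : ℝ² → ℝ² Lipschitz on B_R(0), and χ : ℝ² → [0,1] Lipschitz with χ(z) = 0 for z ∉ U_0. For x ∈ ℝ² let R_x be the rotation matrix determined by v_d(x) (cos θ_x = v_d(x)·e₁, sin θ_x the third component of (v_d(x),0)×(e₁,0)), and ξ_x(z) = R_x z + x. Define v[μ](x) = v_d(x) + N ∫_{ℝ²} F(R_x z) χ(z) d(ξ_x^{−1}#μ)(z), equivalently v[μ](x) = v_d(x) + N ∫_{ℝ²} F(y−x) χ(ξ_x^{−1}(y)) dμ(y). Then v satisfies Assumption A: (i) |v[μ](x)| ≤ 1 + N sup_{|z|≤R}|F(z)|; (ii) there is L > 0 with |v[ν](y) − v[μ](x)| ≤ L(|y−x| + W₁(μ,ν)) for all x,y ∈ ℝ² and μ,ν ∈ P₁(ℝ²); (iii) v[αμ+(1−α)ν] = αv[μ]+(1−α)v[ν] for α ∈ [0,1]. -/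

import Mathlib

open MeasureTheory Metric Filter

noncomputable section

abbrev Euc (d : ℕ) := EuclideanSpace ℝ (Fin d)

/-- `P1 μ`: μ is a Borel probability measure with finite first moment. -/
def P1 {d : ℕ} (μ : Measure (Euc d)) : Prop :=
  IsProbabilityMeasure μ ∧ Integrable (fun x => ‖x‖) μ

/-- The Wasserstein distance `W₁(μ,ν) = sup {∫ φ dν − ∫ φ dμ : φ 1-Lipschitz}`. -/
def W1 {d : ℕ} (μ ν : Measure (Euc d)) : ℝ :=
  ⨆ φ : {φ : Euc d → ℝ // LipschitzWith 1 φ}, (∫ x, φ.1 x ∂ν - ∫ x, φ.1 x ∂μ)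

lemma euc2_norm_eq' (u : Euc 2) : ‖u‖ = Real.sqrt ((u 0)^2 + (u 1)^2) := by
  rw [EuclideanSpace.norm_eq]; simp [Fin.sum_univ_two, sq_abs]

lemma euc2_abs_le' (u : Euc 2) (i : Fin 2) : |u i| ≤ ‖u‖ := by
  rw [euc2_norm_eq', show |u i| = Real.sqrt ((u i)^2) by rw [Real.sqrt_sq_eq_abs]]
  apply Real.sqrt_le_sqrt
  fin_cases i <;> simp <;> nlinarith [sq_nonneg (u 0), sq_nonneg (u 1)]

lemma euc2_norm_le' (u : Euc 2) : ‖u‖ ≤ |u 0| + |u 1| := by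
  rw [euc2_norm_eq', show |u 0| + |u 1| = Real.sqrt ((|u 0| + |u 1|)^2) by
    rw [Real.sqrt_sq (by positivity)]]
  apply Real.sqrt_le_sqrt
  nlinarith [abs_nonneg (u 0), abs_nonneg (u 1), sq_abs (u 0), sq_abs (u 1)]

lemma rot_sqrt_aux' (cc ss a b : ℝ) (h : cc^2 + ss^2 = 1) :
    Real.sqrt ((cc*a+ss*b)^2 + (-(ss)*a+cc*b)^2) = Real.sqrt (a^2+b^2) := by
  congr 1; nlinarith

lemma abs_add4' (a b c d : ℝ) : |a+b+c+d| ≤ |a|+|b|+|c|+|d| := by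
  calc |a+b+c+d| ≤ |a+b+c| + |d| := abs_add_le _ _
    _ ≤ (|a+b| + |c|) + |d| := by gcongr; exact abs_add_le _ _
    _ ≤ ((|a| + |b|) + |c|) + |d| := by gcongr; exact abs_add_le _ _

set_option maxHeartbeats 2000000 in

/-- Proposition 3 of the paper: anisotropic interactions in `ℝ²`.
Let `v_d : ℝ² → ℝ²` be Lipschitz with `|v_d(x)| = 1`, `R > 0`, `N ∈ ℕ`, `U₀ ⊆ B_R(0)`
measurable, `F` Lipschitz on the ball of radius `R`, and `χ : ℝ² → [0,1]` Lipschitz with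
`χ = 0` outside `U₀`. With `R_x` the rotation determined by `v_d(x)` and
`ξ_x(z) = R_x z + x`, the velocity
`v[μ](x) = v_d(x) + N ∫ F(y−x) χ(ξ_x⁻¹(y)) dμ(y)` satisfies Assumption A:
(i) `|v[μ](x)| ≤ 1 + N sup_{|z|≤R}|F|`; (ii) combined Lipschitz continuity in `x` and
`μ` (w.r.t. `W₁`); (iii) linearity w.r.t. the measure for convex combinations. -/
theorem anisotropic_velocity_satisfies_assumptionA
    (vd : Euc 2 → Euc 2) (Kd : NNReal) (hvdlip : LipschitzWith Kd vd)
    (hunit : ∀ x, ‖vd x‖ = 1)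
    (R : ℝ) (hR : 0 < R) (N : ℕ)
    (U₀ : Set (Euc 2)) (hU₀sub : U₀ ⊆ Metric.ball 0 R) (hU₀meas : MeasurableSet U₀)
    (F : Euc 2 → Euc 2) (LF : NNReal)
    (hF : LipschitzOnWith LF F (Metric.closedBall 0 R))
    (χ : Euc 2 → ℝ) (Lχ : NNReal) (hχlip : LipschitzWith Lχ χ)
    (hχrange : ∀ z, χ z ∈ Set.Icc (0:ℝ) 1)
    (hχ0 : ∀ z ∉ U₀, χ z = 0)
    (Fmax : ℝ) (hFmax : Fmax = ⨆ z : Metric.closedBall (0:Euc 2) R, ‖F z.1‖)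
    (c s : Euc 2 → ℝ)
    (hc : ∀ x, c x = (inner ℝ (vd x) (EuclideanSpace.single (0 : Fin 2) (1:ℝ)) : ℝ))
    (hs : ∀ x, s x = (crossProduct ![vd x 0, vd x 1, 0]) ![1, 0, 0] 2)
    (Rm : Euc 2 → Matrix (Fin 2) (Fin 2) ℝ)
    (hRm : ∀ x, Rm x = !![c x, -(s x); s x, c x])
    (ξinv : Euc 2 → Euc 2 → Euc 2)
    (hξinv : ∀ x y, ξinv x y =
      (EuclideanSpace.equiv (Fin 2) ℝ).symm ((Rm x)⁻¹.mulVec (fun l => (y - x) l)))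
    (v : Measure (Euc 2) → Euc 2 → Euc 2)
    (hv : ∀ μ x, v μ x = vd x + (N : ℝ) • ∫ y, χ (ξinv x y) • F (y - x) ∂μ) :
    (∀ μ, P1 μ → ∀ x, ‖v μ x‖ ≤ 1 + N * Fmax) ∧
    (∃ L : ℝ, 0 < L ∧ ∀ μ ν, P1 μ → P1 ν → ∀ x y,
      ‖v ν y - v μ x‖ ≤ L * (‖y - x‖ + W1 μ ν)) ∧
    (∀ μ ν, P1 μ → P1 ν → ∀ α : ℝ, 0 ≤ α → α ≤ 1 → ∀ x,
      v (ENNReal.ofReal α • μ + ENNReal.ofReal (1 - α) • ν) x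
        = α • v μ x + (1 - α) • v ν x) := by
  -- the interaction kernel
  set g : Euc 2 → Euc 2 → Euc 2 := fun x y => χ (ξinv x y) • F (y - x) with hg
  have hv' : ∀ μ x, v μ x = vd x + (N : ℝ) • ∫ y, g x y ∂μ := hv
  -- Fmax basics
  have hFmax0 : 0 ≤ Fmax := by
    rw [hFmax]; exact Real.iSup_nonneg fun z => norm_nonneg _
  have hFbdd : BddAbove (Set.range fun z : Metric.closedBall (0:Euc 2) R => ‖F z.1‖) := by
    obtain ⟨C, hC⟩ := (isCompact_closedBall (0:Euc 2) R).bddAbove_image hF.continuousOn.norm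
    refine ⟨C, ?_⟩
    rintro _ ⟨z, rfl⟩
    exact hC ⟨z.1, z.2, rfl⟩
  have hFle : ∀ z : Euc 2, ‖z‖ ≤ R → ‖F z‖ ≤ Fmax := by
    intro z hz
    rw [hFmax]
    exact le_ciSup hFbdd (⟨z, by simpa [mem_closedBall_zero_iff] using hz⟩ :
      Metric.closedBall (0:Euc 2) R)
  -- rotation entries
  have hc' : ∀ x, c x = vd x 0 := by intro x; rw [hc]; simp [EuclideanSpace.inner_single_right]
  have hs' : ∀ x, s x = -(vd x 1) := by intro x; rw [hs]; simp [crossProduct]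
  have hcs : ∀ x, (c x)^2 + (s x)^2 = 1 := by
    intro x
    have h1 := hunit x
    rw [euc2_norm_eq'] at h1
    have h2 : (vd x 0)^2 + (vd x 1)^2 = 1 := by
      have := Real.sq_sqrt (by positivity : (0:ℝ) ≤ (vd x 0)^2 + (vd x 1)^2)
      rw [h1] at this; linarith [this]
    rw [hc', hs']; nlinarith
  have hcabs : ∀ x, |c x| ≤ 1 := fun x => abs_le.mpr ⟨by nlinarith [hcs x, sq_nonneg (s x)],
    by nlinarith [hcs x, sq_nonneg (s x)]⟩
  have hsabs : ∀ x, |s x| ≤ 1 := fun x => abs_le.mpr ⟨by nlinarith [hcs x, sq_nonneg (c x)],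
    by nlinarith [hcs x, sq_nonneg (c x)]⟩
  have hvdcomp : ∀ (x x' : Euc 2) (i : Fin 2), |vd x i - vd x' i| ≤ Kd * ‖x - x'‖ := by
    intro x x' i
    have h1 : |(vd x - vd x') i| ≤ ‖vd x - vd x'‖ := euc2_abs_le' _ i
    have h2 : ‖vd x - vd x'‖ ≤ Kd * ‖x - x'‖ := by
      have := hvdlip.dist_le_mul x x'
      rwa [dist_eq_norm, dist_eq_norm] at this
    simpa using h1.trans h2
  have hclip : ∀ x x', |c x - c x'| ≤ Kd * ‖x - x'‖ := by
    intro x x'; rw [hc', hc']; exact hvdcomp x x' 0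
  have hslip : ∀ x x', |s x - s x'| ≤ Kd * ‖x - x'‖ := by
    intro x x'; rw [hs', hs']
    have := hvdcomp x x' 1
    rwa [show -(vd x 1) - -(vd x' 1) = -(vd x 1 - vd x' 1) by ring, abs_neg]
  -- coordinates of ξinv
  have hξc : ∀ x y, ξinv x y 0 = c x * (y 0 - x 0) + s x * (y 1 - x 1) ∧
      ξinv x y 1 = -(s x) * (y 0 - x 0) + c x * (y 1 - x 1) := by
    intro x y
    have hinvM : (Rm x)⁻¹ = !![c x, s x; -(s x), c x] := by
      rw [hRm]
      apply Matrix.inv_eq_right_inv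
      ext i j
      fin_cases i <;> fin_cases j <;>
        simp [Matrix.mul_apply, Fin.sum_univ_two] <;> nlinarith [hcs x]
    rw [hξinv, hinvM]
    constructor <;>
      simp [Matrix.mulVec, dotProduct, Matrix.vecHead, Matrix.vecTail,
        Fin.sum_univ_two, EuclideanSpace.equiv, WithLp.equiv_symm_apply]
  have hξ0 := fun x y => (hξc x y).1
  have hξ1 := fun x y => (hξc x y).2
  -- ξinv x · is an isometry onto differences
  have hξnorm : ∀ x y, ‖ξinv x y‖ = ‖y - x‖ := by
    intro x y
    rw [euc2_norm_eq', euc2_norm_eq', hξ0, hξ1]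
    have := rot_sqrt_aux' (c x) (s x) (y 0 - x 0) (y 1 - x 1) (hcs x)
    rw [this]
    congr 2 <;> simp [PiLp.sub_apply]
  have hξdist : ∀ x y y', ‖ξinv x y - ξinv x y'‖ = ‖y - y'‖ := by
    intro x y y'
    rw [euc2_norm_eq', euc2_norm_eq']
    have e0 : (ξinv x y - ξinv x y') 0 = c x * (y 0 - y' 0) + s x * (y 1 - y' 1) := by
      rw [PiLp.sub_apply, hξ0, hξ0]; ring
    have e1 : (ξinv x y - ξinv x y') 1 = -(s x) * (y 0 - y' 0) + c x * (y 1 - y' 1) := by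
      rw [PiLp.sub_apply, hξ1, hξ1]; ring
    rw [e0, e1, rot_sqrt_aux' (c x) (s x) _ _ (hcs x)]
    congr 2 <;> simp [PiLp.sub_apply]
  -- Lipschitz continuity of ξinv in the base point, on the relevant ball
  have hCξ0 : (0:ℝ) ≤ 4 * Kd * R + 4 := by positivity
  have hξlipx : ∀ x x' z : Euc 2, ‖z - x‖ ≤ R →
      ‖ξinv x z - ξinv x' z‖ ≤ (4 * Kd * R + 4) * ‖x - x'‖ := by
    intro x x' z hz
    have hz0 : |z 0 - x 0| ≤ R := by
      have := euc2_abs_le' (z - x) 0; simp [PiLp.sub_apply] at this; linarith [this.trans hz]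
    have hz1 : |z 1 - x 1| ≤ R := by
      have := euc2_abs_le' (z - x) 1; simp [PiLp.sub_apply] at this; linarith [this.trans hz]
    have hx0 : |x' 0 - x 0| ≤ ‖x - x'‖ := by
      have := euc2_abs_le' (x - x') 0; simp [PiLp.sub_apply] at this
      rw [abs_sub_comm]; exact this
    have hx1 : |x' 1 - x 1| ≤ ‖x - x'‖ := by
      have := euc2_abs_le' (x - x') 1; simp [PiLp.sub_apply] at this
      rw [abs_sub_comm]; exact this
    have e0 : (ξinv x z - ξinv x' z) 0 =
        (c x - c x') * (z 0 - x 0) + (s x - s x') * (z 1 - x 1)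
          + c x' * (x' 0 - x 0) + s x' * (x' 1 - x 1) := by
      rw [PiLp.sub_apply, hξ0, hξ0]; ring
    have e1 : (ξinv x z - ξinv x' z) 1 =
        -((s x - s x')) * (z 0 - x 0) + (c x - c x') * (z 1 - x 1)
          + (-(s x')) * (x' 0 - x 0) + c x' * (x' 1 - x 1) := by
      rw [PiLp.sub_apply, hξ1, hξ1]; ring
    have hKd0 : (0:ℝ) ≤ Kd * ‖x - x'‖ := by positivity
    have b0 : |(ξinv x z - ξinv x' z) 0| ≤ Kd * ‖x - x'‖ * R + Kd * ‖x - x'‖ * R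
        + ‖x - x'‖ + ‖x - x'‖ := by
      rw [e0]
      have h1 : |(c x - c x') * (z 0 - x 0)| ≤ Kd * ‖x - x'‖ * R := by
        rw [abs_mul]
        exact mul_le_mul (hclip x x') hz0 (abs_nonneg _) hKd0
      have h2 : |(s x - s x') * (z 1 - x 1)| ≤ Kd * ‖x - x'‖ * R := by
        rw [abs_mul]
        exact mul_le_mul (hslip x x') hz1 (abs_nonneg _) hKd0
      have h3 : |c x' * (x' 0 - x 0)| ≤ ‖x - x'‖ := by
        rw [abs_mul]
        calc |c x'| * |x' 0 - x 0| ≤ 1 * ‖x - x'‖ :=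
          mul_le_mul (hcabs x') hx0 (abs_nonneg _) zero_le_one
        _ = ‖x - x'‖ := one_mul _
      have h4 : |s x' * (x' 1 - x 1)| ≤ ‖x - x'‖ := by
        rw [abs_mul]
        calc |s x'| * |x' 1 - x 1| ≤ 1 * ‖x - x'‖ :=
          mul_le_mul (hsabs x') hx1 (abs_nonneg _) zero_le_one
        _ = ‖x - x'‖ := one_mul _
      have := abs_add4' ((c x - c x') * (z 0 - x 0)) ((s x - s x') * (z 1 - x 1))
        (c x' * (x' 0 - x 0)) (s x' * (x' 1 - x 1))
      linarith
    have b1 : |(ξinv x z - ξinv x' z) 1| ≤ Kd * ‖x - x'‖ * R + Kd * ‖x - x'‖ * R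
        + ‖x - x'‖ + ‖x - x'‖ := by
      rw [e1]
      have h1 : |(-((s x - s x'))) * (z 0 - x 0)| ≤ Kd * ‖x - x'‖ * R := by
        rw [abs_mul, abs_neg]
        exact mul_le_mul (hslip x x') hz0 (abs_nonneg _) hKd0
      have h2 : |(c x - c x') * (z 1 - x 1)| ≤ Kd * ‖x - x'‖ * R := by
        rw [abs_mul]
        exact mul_le_mul (hclip x x') hz1 (abs_nonneg _) hKd0
      have h3 : |(-(s x')) * (x' 0 - x 0)| ≤ ‖x - x'‖ := by
        rw [abs_mul, abs_neg]
        calc |s x'| * |x' 0 - x 0| ≤ 1 * ‖x - x'‖ :=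
          mul_le_mul (hsabs x') hx0 (abs_nonneg _) zero_le_one
        _ = ‖x - x'‖ := one_mul _
      have h4 : |c x' * (x' 1 - x 1)| ≤ ‖x - x'‖ := by
        rw [abs_mul]
        calc |c x'| * |x' 1 - x 1| ≤ 1 * ‖x - x'‖ :=
          mul_le_mul (hcabs x') hx1 (abs_nonneg _) zero_le_one
        _ = ‖x - x'‖ := one_mul _
      have := abs_add4' ((-((s x - s x'))) * (z 0 - x 0)) ((c x - c x') * (z 1 - x 1))
        ((-(s x')) * (x' 0 - x 0)) (c x' * (x' 1 - x 1))
      linarith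
    calc ‖ξinv x z - ξinv x' z‖ ≤ |(ξinv x z - ξinv x' z) 0| + |(ξinv x z - ξinv x' z) 1| :=
        euc2_norm_le' _
      _ ≤ 2 * (Kd * ‖x - x'‖ * R + Kd * ‖x - x'‖ * R + ‖x - x'‖ + ‖x - x'‖) := by linarith
      _ = (4 * Kd * R + 4) * ‖x - x'‖ := by ring
  -- χ basics
  have hχbd : ∀ t, |χ t| ≤ 1 := by
    intro t
    rcases hχrange t with ⟨h0, h1⟩
    rw [abs_le]; constructor <;> linarith
  have hχdist : ∀ t t', |χ t - χ t'| ≤ Lχ * ‖t - t'‖ := by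
    intro t t'
    have := hχlip.dist_le_mul t t'
    rw [dist_eq_norm, dist_eq_norm] at this
    rwa [Real.norm_eq_abs] at this
  have hsupp : ∀ x y : Euc 2, R ≤ ‖y - x‖ → χ (ξinv x y) = 0 := by
    intro x y hxy
    apply hχ0
    intro hmem
    have := hU₀sub hmem
    rw [mem_ball_zero_iff, hξnorm] at this
    linarith
  have hsupp' : ∀ x y : Euc 2, χ (ξinv x y) ≠ 0 → ‖y - x‖ < R := by
    intro x y h
    by_contra hcon
    exact h (hsupp x y (le_of_not_gt hcon))
  -- bound on g
  have hgb : ∀ x y, ‖g x y‖ ≤ Fmax := by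
    intro x y
    by_cases hchi : χ (ξinv x y) = 0
    · simp [hg, hchi, hFmax0]
    · have hlt := hsupp' x y hchi
      rw [hg]
      simp only [norm_smul, Real.norm_eq_abs]
      calc |χ (ξinv x y)| * ‖F (y - x)‖ ≤ 1 * Fmax :=
        mul_le_mul (hχbd _) (hFle _ hlt.le) (norm_nonneg _) zero_le_one
      _ = Fmax := one_mul _
  -- Lipschitz constants
  set L1 : ℝ := Lχ * Fmax + LF + 1 with hL1
  have hL1pos : 0 < L1 := by positivity
  set L2 : ℝ := Lχ * Fmax * (4 * Kd * R + 4) + LF with hL2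
  have hL20 : 0 ≤ L2 := by positivity
  -- F on the ball
  have hFdist : ∀ a b : Euc 2, ‖a‖ ≤ R → ‖b‖ ≤ R → ‖F a - F b‖ ≤ LF * ‖a - b‖ := by
    intro a b ha hb
    have := hF.dist_le_mul a (by simpa [mem_closedBall_zero_iff] using ha)
      b (by simpa [mem_closedBall_zero_iff] using hb)
    rwa [dist_eq_norm, dist_eq_norm] at this
  -- Lipschitz of g in y
  have hglip : ∀ x y y', ‖g x y - g x y'‖ ≤ L1 * ‖y - y'‖ := by
    intro x y y'
    have hnn : 0 ≤ ‖y - y'‖ := norm_nonneg _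
    have hχd : |χ (ξinv x y) - χ (ξinv x y')| ≤ Lχ * ‖y - y'‖ := by
      have := hχdist (ξinv x y) (ξinv x y')
      rwa [hξdist] at this
    rcases lt_or_ge ‖y - x‖ R with hy | hy
    · -- main case
      have key : g x y - g x y' =
          (χ (ξinv x y) - χ (ξinv x y')) • F (y - x)
            + χ (ξinv x y') • (F (y - x) - F (y' - x)) := by
        rw [hg]; simp only [sub_smul, smul_sub]; abel
      rw [key]
      by_cases hb : χ (ξinv x y') = 0
      · rw [hb]
        simp only [zero_smul, add_zero, norm_smul, Real.norm_eq_abs, sub_zero]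
        have hχd' : |χ (ξinv x y)| ≤ Lχ * ‖y - y'‖ := by
          rw [show χ (ξinv x y) = χ (ξinv x y) - χ (ξinv x y') by rw [hb]; ring]
          exact hχd
        calc |χ (ξinv x y)| * ‖F (y - x)‖ ≤ (Lχ * ‖y - y'‖) * Fmax :=
          mul_le_mul hχd' (hFle _ hy.le) (norm_nonneg _) (by positivity)
        _ ≤ L1 * ‖y - y'‖ := by rw [hL1]; nlinarith [hnn, hFmax0, mul_nonneg (NNReal.coe_nonneg LF) hnn, mul_nonneg (NNReal.coe_nonneg Lχ) hnn, mul_nonneg (mul_nonneg (NNReal.coe_nonneg Lχ) hFmax0) hnn]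
      · have hy' := hsupp' x y' hb
        calc ‖(χ (ξinv x y) - χ (ξinv x y')) • F (y - x)
              + χ (ξinv x y') • (F (y - x) - F (y' - x))‖
            ≤ ‖(χ (ξinv x y) - χ (ξinv x y')) • F (y - x)‖
              + ‖χ (ξinv x y') • (F (y - x) - F (y' - x))‖ := norm_add_le _ _
          _ ≤ (Lχ * ‖y - y'‖) * Fmax + 1 * (LF * ‖y - y'‖) := by
              gcongr ?_ + ?_
              · rw [norm_smul, Real.norm_eq_abs]
                exact mul_le_mul hχd (hFle _ hy.le) (norm_nonneg _) (by positivity)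
              · rw [norm_smul, Real.norm_eq_abs]
                have := hFdist (y - x) (y' - x) hy.le hy'.le
                rw [show y - x - (y' - x) = y - y' by abel] at this
                exact mul_le_mul (hχbd _) this (norm_nonneg _) zero_le_one
          _ ≤ L1 * ‖y - y'‖ := by rw [hL1]; nlinarith [hnn, hFmax0, mul_nonneg (NNReal.coe_nonneg LF) hnn, mul_nonneg (NNReal.coe_nonneg Lχ) hnn, mul_nonneg (mul_nonneg (NNReal.coe_nonneg Lχ) hFmax0) hnn]
    · -- g x y = 0
      have ha : χ (ξinv x y) = 0 := hsupp x y hy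
      have hgy : g x y = 0 := by rw [hg]; simp [ha]
      rw [hgy, zero_sub, norm_neg]
      by_cases hb : χ (ξinv x y') = 0
      · rw [hg]; simp [hb]; positivity
      · have hy' := hsupp' x y' hb
        rw [hg]
        simp only [norm_smul, Real.norm_eq_abs]
        have : |χ (ξinv x y')| = |χ (ξinv x y) - χ (ξinv x y')| := by rw [ha]; simp
        rw [this]
        calc |χ (ξinv x y) - χ (ξinv x y')| * ‖F (y' - x)‖ ≤ (Lχ * ‖y - y'‖) * Fmax :=
          mul_le_mul hχd (hFle _ hy'.le) (norm_nonneg _) (by positivity)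
        _ ≤ L1 * ‖y - y'‖ := by rw [hL1]; nlinarith [hnn, hFmax0, mul_nonneg (NNReal.coe_nonneg LF) hnn, mul_nonneg (NNReal.coe_nonneg Lχ) hnn, mul_nonneg (mul_nonneg (NNReal.coe_nonneg Lχ) hFmax0) hnn]
  -- Lipschitz of g in x
  have hglipx : ∀ x x' y, ‖g x y - g x' y‖ ≤ L2 * ‖x - x'‖ := by
    intro x x' y
    have hnn : 0 ≤ ‖x - x'‖ := norm_nonneg _
    rcases lt_or_ge ‖y - x‖ R with hy | hy
    · have hχd : |χ (ξinv x y) - χ (ξinv x' y)| ≤ Lχ * ((4 * Kd * R + 4) * ‖x - x'‖) := by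
        calc |χ (ξinv x y) - χ (ξinv x' y)| ≤ Lχ * ‖ξinv x y - ξinv x' y‖ := hχdist _ _
        _ ≤ Lχ * ((4 * Kd * R + 4) * ‖x - x'‖) := by
            exact mul_le_mul_of_nonneg_left (hξlipx x x' y hy.le) (by positivity)
      have key : g x y - g x' y =
          (χ (ξinv x y) - χ (ξinv x' y)) • F (y - x)
            + χ (ξinv x' y) • (F (y - x) - F (y - x')) := by
        rw [hg]; simp only [sub_smul, smul_sub]; abel
      rw [key]
      by_cases hb : χ (ξinv x' y) = 0
      · rw [hb]
        simp only [zero_smul, add_zero, norm_smul, Real.norm_eq_abs, sub_zero]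
        have hχd' : |χ (ξinv x y)| ≤ Lχ * ((4 * Kd * R + 4) * ‖x - x'‖) := by
          rw [show χ (ξinv x y) = χ (ξinv x y) - χ (ξinv x' y) by rw [hb]; ring]
          exact hχd
        calc |χ (ξinv x y)| * ‖F (y - x)‖
            ≤ (Lχ * ((4 * Kd * R + 4) * ‖x - x'‖)) * Fmax :=
          mul_le_mul hχd' (hFle _ hy.le) (norm_nonneg _) (by positivity)
        _ ≤ L2 * ‖x - x'‖ := by rw [hL2]; nlinarith [hnn, hFmax0, mul_nonneg (NNReal.coe_nonneg LF) hnn, mul_nonneg (NNReal.coe_nonneg Lχ) hnn, mul_nonneg (mul_nonneg (NNReal.coe_nonneg Lχ) hFmax0) hnn]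
      · have hy' := hsupp' x' y hb
        calc ‖(χ (ξinv x y) - χ (ξinv x' y)) • F (y - x)
              + χ (ξinv x' y) • (F (y - x) - F (y - x'))‖
            ≤ ‖(χ (ξinv x y) - χ (ξinv x' y)) • F (y - x)‖
              + ‖χ (ξinv x' y) • (F (y - x) - F (y - x'))‖ := norm_add_le _ _
          _ ≤ (Lχ * ((4 * Kd * R + 4) * ‖x - x'‖)) * Fmax + 1 * (LF * ‖x - x'‖) := by
              gcongr ?_ + ?_
              · rw [norm_smul, Real.norm_eq_abs]
                exact mul_le_mul hχd (hFle _ hy.le) (norm_nonneg _) (by positivity)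
              · rw [norm_smul, Real.norm_eq_abs]
                have h5 := hFdist (y - x) (y - x') hy.le hy'.le
                rw [show y - x - (y - x') = x' - x by abel, ← norm_sub_rev x x'] at h5
                exact mul_le_mul (hχbd _) h5 (norm_nonneg _) zero_le_one
          _ ≤ L2 * ‖x - x'‖ := by rw [hL2]; nlinarith [hnn, hFmax0, mul_nonneg (NNReal.coe_nonneg LF) hnn, mul_nonneg (NNReal.coe_nonneg Lχ) hnn, mul_nonneg (mul_nonneg (NNReal.coe_nonneg Lχ) hFmax0) hnn]
    · have ha : χ (ξinv x y) = 0 := hsupp x y hy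
      have hgy : g x y = 0 := by rw [hg]; simp [ha]
      rw [hgy, zero_sub, norm_neg]
      by_cases hb : χ (ξinv x' y) = 0
      · rw [hg]; simp [hb]; positivity
      · have hy' := hsupp' x' y hb
        rw [hg]
        simp only [norm_smul, Real.norm_eq_abs]
        have e1 : |χ (ξinv x' y)| = |χ (ξinv x y) - χ (ξinv x' y)| := by rw [ha]; simp
        have hχd : |χ (ξinv x y) - χ (ξinv x' y)| ≤ Lχ * ((4 * Kd * R + 4) * ‖x - x'‖) := by
          calc |χ (ξinv x y) - χ (ξinv x' y)| ≤ Lχ * ‖ξinv x y - ξinv x' y‖ := hχdist _ _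
          _ = Lχ * ‖ξinv x' y - ξinv x y‖ := by rw [norm_sub_rev]
          _ ≤ Lχ * ((4 * Kd * R + 4) * ‖x' - x‖) := by
              exact mul_le_mul_of_nonneg_left (hξlipx x' x y hy'.le) (by positivity)
          _ = Lχ * ((4 * Kd * R + 4) * ‖x - x'‖) := by rw [norm_sub_rev]
        rw [e1]
        calc |χ (ξinv x y) - χ (ξinv x' y)| * ‖F (y - x')‖
            ≤ (Lχ * ((4 * Kd * R + 4) * ‖x - x'‖)) * Fmax :=
          mul_le_mul hχd (hFle _ hy'.le) (norm_nonneg _) (by positivity)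
        _ ≤ L2 * ‖x - x'‖ := by rw [hL2]; nlinarith [hnn, hFmax0, mul_nonneg (NNReal.coe_nonneg LF) hnn, mul_nonneg (NNReal.coe_nonneg Lχ) hnn, mul_nonneg (mul_nonneg (NNReal.coe_nonneg Lχ) hFmax0) hnn]
  -- continuity and integrability of g
  have hgcont : ∀ x, Continuous (g x) := by
    intro x
    apply LipschitzWith.continuous (K := L1.toNNReal)
    apply LipschitzWith.of_dist_le_mul
    intro y y'
    rw [dist_eq_norm, dist_eq_norm, Real.coe_toNNReal _ hL1pos.le]
    exact hglip x y y'
  have hgint : ∀ (x : Euc 2) (μ : Measure (Euc 2)), IsProbabilityMeasure μ →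
      Integrable (g x) μ := by
    intro x μ hμ
    exact Integrable.mono' (integrable_const Fmax) (hgcont x).aestronglyMeasurable
      (Filter.Eventually.of_forall fun y => hgb x y)
  -- Part (i)
  refine ⟨?_, ?_, ?_⟩
  · intro μ hμ x
    haveI := hμ.1
    rw [hv']
    calc ‖vd x + (N : ℝ) • ∫ y, g x y ∂μ‖
        ≤ ‖vd x‖ + ‖(N : ℝ) • ∫ y, g x y ∂μ‖ := norm_add_le _ _
      _ ≤ 1 + N * Fmax := by
          rw [hunit x, norm_smul, Real.norm_natCast]
          gcongr
          have : ‖∫ y, g x y ∂μ‖ ≤ Fmax * (μ Set.univ).toReal :=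
            norm_integral_le_of_norm_le_const (Filter.Eventually.of_forall fun y => hgb x y)
          simpa using this
  · -- Part (ii)
    refine ⟨(Kd : ℝ) + N * L2 + 2 * N * L1 + 1, by positivity, ?_⟩
    intro μ ν hμ hν x y
    haveI := hμ.1
    haveI := hν.1
    -- integrability of 1-Lipschitz functions
    have hφint : ∀ (φ : Euc 2 → ℝ), LipschitzWith 1 φ →
        ∀ (m : Measure (Euc 2)), P1 m → Integrable φ m := by
      intro φ hφ m hm
      haveI := hm.1
      apply Integrable.mono' ((integrable_const |φ 0|).add hm.2) hφ.continuous.aestronglyMeasurable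
      apply Filter.Eventually.of_forall
      intro z
      have h1 := hφ.dist_le_mul z 0
      rw [Real.dist_eq, dist_eq_norm, sub_zero, NNReal.coe_one, one_mul] at h1
      rw [Real.norm_eq_abs]
      calc |φ z| = |(φ z - φ 0) + φ 0| := by ring_nf
        _ ≤ |φ z - φ 0| + |φ 0| := abs_add_le _ _
        _ ≤ |φ 0| + ‖z‖ := by linarith
    -- BddAbove for the W1 sup
    have hbdd : BddAbove (Set.range fun φ : {φ : Euc 2 → ℝ // LipschitzWith 1 φ} =>
        (∫ z, φ.1 z ∂ν - ∫ z, φ.1 z ∂μ)) := by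
      refine ⟨(∫ z, ‖z‖ ∂ν) + ∫ z, ‖z‖ ∂μ, ?_⟩
      rintro _ ⟨φ, rfl⟩
      have hiν := hφint φ.1 φ.2 ν hν
      have hiμ := hφint φ.1 φ.2 μ hμ
      have hb : ∀ z : Euc 2, |φ.1 z - φ.1 0| ≤ ‖z‖ := by
        intro z
        have h1 := φ.2.dist_le_mul z 0
        rwa [Real.dist_eq, dist_eq_norm, sub_zero, NNReal.coe_one, one_mul] at h1
      have e1 : ∫ z, φ.1 z ∂ν = (∫ z, (φ.1 z - φ.1 0) ∂ν) + φ.1 0 := by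
        rw [integral_sub hiν (integrable_const _), integral_const]
        simp
      have e2 : ∫ z, φ.1 z ∂μ = (∫ z, (φ.1 z - φ.1 0) ∂μ) + φ.1 0 := by
        rw [integral_sub hiμ (integrable_const _), integral_const]
        simp
      have i1 : ∫ z, (φ.1 z - φ.1 0) ∂ν ≤ ∫ z, ‖z‖ ∂ν := by
        apply integral_mono (hiν.sub (integrable_const _)) hν.2
        intro z
        exact (le_abs_self _).trans (hb z)
      have i2 : -(∫ z, ‖z‖ ∂μ) ≤ ∫ z, (φ.1 z - φ.1 0) ∂μ := by
        rw [← integral_neg]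
        apply integral_mono hμ.2.neg (hiμ.sub (integrable_const _))
        intro z
        have := (neg_abs_le (φ.1 z - φ.1 0)).trans' (neg_le_neg (hb z))
        simpa using this
      simp only
      linarith
    have hW1le : ∀ (φ : Euc 2 → ℝ), LipschitzWith 1 φ →
        (∫ z, φ z ∂ν) - ∫ z, φ z ∂μ ≤ W1 μ ν := by
      intro φ hφ
      simp only [W1]
      exact le_ciSup hbdd (⟨φ, hφ⟩ : {φ : Euc 2 → ℝ // LipschitzWith 1 φ})
    have hW1nn : 0 ≤ W1 μ ν := by
      have := hW1le (fun _ => (0:ℝ)) ((LipschitzWith.const (0:ℝ)).weaken zero_le_one)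
      simpa using this
    -- per-coordinate W1 bound for g y
    have hcoord : ∀ i : Fin 2,
        |(∫ z, g y z ∂ν) i - (∫ z, g y z ∂μ) i| ≤ L1 * W1 μ ν := by
      intro i
      have hproj : ∀ (m : Measure (Euc 2)), IsProbabilityMeasure m →
          (∫ z, g y z ∂m) i = ∫ z, g y z i ∂m := by
        intro m hm
        have := (ContinuousLinearMap.integral_comp_comm
          (EuclideanSpace.proj (𝕜 := ℝ) i) (hgint y m hm)).symm
        simpa using this
      have key : ∀ e : ℝ, |e| = 1 →
          (∫ z, e * g y z i ∂ν) - (∫ z, e * g y z i ∂μ) ≤ L1 * W1 μ ν := by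
        intro e he
        have hφ : LipschitzWith 1 (fun z => L1⁻¹ * (e * g y z i)) := by
          apply LipschitzWith.of_dist_le_mul
          intro z z'
          rw [Real.dist_eq, dist_eq_norm, NNReal.coe_one, one_mul]
          have h1 : |g y z i - g y z' i| ≤ L1 * ‖z - z'‖ := by
            have h2 : |(g y z - g y z') i| ≤ ‖g y z - g y z'‖ := euc2_abs_le' _ i
            rw [PiLp.sub_apply] at h2
            exact h2.trans (hglip y z z')
          calc |L1⁻¹ * (e * g y z i) - L1⁻¹ * (e * g y z' i)|
              = L1⁻¹ * |g y z i - g y z' i| := by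
                rw [show L1⁻¹ * (e * g y z i) - L1⁻¹ * (e * g y z' i)
                  = L1⁻¹ * e * (g y z i - g y z' i) by ring, abs_mul, abs_mul, he,
                  abs_of_pos (inv_pos.mpr hL1pos)]
                ring
            _ ≤ L1⁻¹ * (L1 * ‖z - z'‖) := by
                exact mul_le_mul_of_nonneg_left h1 (inv_pos.mpr hL1pos).le
            _ = ‖z - z'‖ := by field_simp
        have h3 := hW1le _ hφ
        rw [show (∫ z, L1⁻¹ * (e * g y z i) ∂ν) = L1⁻¹ * ∫ z, e * g y z i ∂ν from
            integral_const_mul _ _,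
          show (∫ z, L1⁻¹ * (e * g y z i) ∂μ) = L1⁻¹ * ∫ z, e * g y z i ∂μ from
            integral_const_mul _ _] at h3
        have h4 : L1⁻¹ * ((∫ z, e * g y z i ∂ν) - ∫ z, e * g y z i ∂μ) ≤ W1 μ ν := by
          rw [mul_sub]; exact h3
        calc (∫ z, e * g y z i ∂ν) - ∫ z, e * g y z i ∂μ
            = L1 * (L1⁻¹ * ((∫ z, e * g y z i ∂ν) - ∫ z, e * g y z i ∂μ)) := by
              rw [← mul_assoc, mul_inv_cancel₀ hL1pos.ne', one_mul]
          _ ≤ L1 * W1 μ ν := mul_le_mul_of_nonneg_left h4 hL1pos.le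
      rw [hproj ν hν.1, hproj μ hμ.1]
      rw [abs_sub_le_iff]
      constructor
      · have := key 1 (by norm_num)
        simpa using this
      · have := key (-1) (by norm_num)
        rw [show (fun z => (-1 : ℝ) * g y z i) = (fun z => -(g y z i)) by funext z; ring] at this
        simp only [integral_neg] at this
        linarith [this]
    -- assemble part (ii)
    have hA : ‖(∫ z, g y z ∂ν) - (∫ z, g y z ∂μ)‖ ≤ 2 * L1 * W1 μ ν := by
      calc ‖(∫ z, g y z ∂ν) - (∫ z, g y z ∂μ)‖
          ≤ |((∫ z, g y z ∂ν) - (∫ z, g y z ∂μ)) 0|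
            + |((∫ z, g y z ∂ν) - (∫ z, g y z ∂μ)) 1| := euc2_norm_le' _
        _ ≤ L1 * W1 μ ν + L1 * W1 μ ν := by
            rw [PiLp.sub_apply, PiLp.sub_apply]
            exact add_le_add (hcoord 0) (hcoord 1)
        _ = 2 * L1 * W1 μ ν := by ring
    have hB : ‖(∫ z, g y z ∂μ) - (∫ z, g x z ∂μ)‖ ≤ L2 * ‖y - x‖ := by
      rw [← integral_sub (hgint y μ hμ.1) (hgint x μ hμ.1)]
      have := norm_integral_le_of_norm_le_const (μ := μ) (C := L2 * ‖y - x‖)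
        (f := fun z => g y z - g x z)
        (Filter.Eventually.of_forall fun z => hglipx y x z)
      simpa using this
    have hvd : ‖vd y - vd x‖ ≤ Kd * ‖y - x‖ := by
      have := hvdlip.dist_le_mul y x
      rwa [dist_eq_norm, dist_eq_norm] at this
    have hsplit : v ν y - v μ x = (vd y - vd x)
        + (N : ℝ) • (((∫ z, g y z ∂ν) - (∫ z, g y z ∂μ))
          + ((∫ z, g y z ∂μ) - (∫ z, g x z ∂μ))) := by
      rw [hv', hv']
      module
    calc ‖v ν y - v μ x‖
        ≤ ‖vd y - vd x‖ + ‖(N : ℝ) • (((∫ z, g y z ∂ν) - (∫ z, g y z ∂μ))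
          + ((∫ z, g y z ∂μ) - (∫ z, g x z ∂μ)))‖ := by rw [hsplit]; exact norm_add_le _ _
      _ ≤ Kd * ‖y - x‖ + N * (2 * L1 * W1 μ ν + L2 * ‖y - x‖) := by
          rw [norm_smul, Real.norm_natCast]
          gcongr
          calc ‖((∫ z, g y z ∂ν) - (∫ z, g y z ∂μ))
              + ((∫ z, g y z ∂μ) - (∫ z, g x z ∂μ))‖
              ≤ ‖(∫ z, g y z ∂ν) - (∫ z, g y z ∂μ)‖
                + ‖(∫ z, g y z ∂μ) - (∫ z, g x z ∂μ)‖ := norm_add_le _ _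
            _ ≤ 2 * L1 * W1 μ ν + L2 * ‖y - x‖ := add_le_add hA hB
      _ ≤ ((Kd : ℝ) + N * L2 + 2 * N * L1 + 1) * (‖y - x‖ + W1 μ ν) := by
          have h1 : (0:ℝ) ≤ ‖y - x‖ := norm_nonneg _
          have h2 : (0:ℝ) ≤ (N : ℝ) := Nat.cast_nonneg _
          have h3 : (0:ℝ) ≤ (Kd : ℝ) := Kd.coe_nonneg
          nlinarith [mul_nonneg h2 (mul_nonneg hL20 h1), mul_nonneg h2 hW1nn,
            mul_nonneg h3 hW1nn, mul_nonneg h1 hL1pos.le, mul_nonneg hW1nn hL1pos.le,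
            mul_nonneg h2 (mul_nonneg hL20 hW1nn), mul_nonneg h2 (mul_nonneg hL1pos.le h1)]
  · -- Part (iii)
    intro μ ν hμ hν α hα0 hα1 x
    haveI := hμ.1
    haveI := hν.1
    have hiμ : Integrable (g x) (ENNReal.ofReal α • μ) :=
      (hgint x μ hμ.1).smul_measure ENNReal.ofReal_ne_top
    have hiν : Integrable (g x) (ENNReal.ofReal (1 - α) • ν) :=
      (hgint x ν hν.1).smul_measure ENNReal.ofReal_ne_top
    have e : ∫ z, g x z ∂(ENNReal.ofReal α • μ + ENNReal.ofReal (1 - α) • ν)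
        = α • (∫ z, g x z ∂μ) + (1 - α) • (∫ z, g x z ∂ν) := by
      rw [integral_add_measure hiμ hiν, integral_smul_measure, integral_smul_measure,
        ENNReal.toReal_ofReal hα0, ENNReal.toReal_ofReal (by linarith)]
    rw [hv', hv', hv', e]
    module
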